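/- The van Est integration map VE⁻¹ : Λ•V → T•(Sym V), defined on ξ₁ ∧ ⋯ ∧ ξ_ℓ (ξᵢ ∈ V) by VE⁻¹(ξ₁ ∧ ⋯ ∧ ξ_ℓ) = (1/ℓ!) Σ_{σ ∈ S_ℓ} sign(σ) ξ_{σ(1)} ⊗ ⋯ ⊗ ξ_{σ(ℓ)}, is a chain map into the kernel of the coalgebra differential (δ_ca ∘ VE⁻¹ = 0), and satisfies VE ∘ VE⁻¹ = id on Λ•V, where VE(X₁ ⊗ ⋯ ⊗ X_k) = pr_V(X₁) ∧ ⋯ ∧ pr_V(X_k). -/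

import Mathlib

open TensorProduct

/-! ### The symmetric algebra of a module

Mathlib does not yet have the symmetric algebra, so we construct it as the
quotient of the tensor algebra by the commutativity relation. -/

/-- The relation on the tensor algebra whose quotient is the symmetric algebra. -/
inductive SymRel (R : Type*) [CommRing R] (V : Type*) [AddCommGroup V] [Module R V] :
    TensorAlgebra R V → TensorAlgebra R V → Prop
  | mul_comm (a b : TensorAlgebra R V) : SymRel R V (a * b) (b * a)

/-- The symmetric algebra `Sym V` of an `R`-module `V`. -/
abbrev SymmAlg (R : Type*) [CommRing R] (V : Type*) [AddCommGroup V] [Module R V] : Type _ :=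
  RingQuot (SymRel R V)

variable (R : Type*) [CommRing R] (V : Type*) [AddCommGroup V] [Module R V]

noncomputable instance : CommRing (SymmAlg R V) :=
  { (inferInstance : Ring (RingQuot (SymRel R V))) with
    mul_comm := by
      intro a b
      obtain ⟨x, rfl⟩ := RingQuot.mkRingHom_surjective (SymRel R V) a
      obtain ⟨y, rfl⟩ := RingQuot.mkRingHom_surjective (SymRel R V) b
      rw [← map_mul, ← map_mul, RingQuot.mkRingHom_rel (SymRel.mul_comm x y)] }

/-- The canonical inclusion `V →ₗ Sym V` of the generators. -/
noncomputable def ιS : V →ₗ[R] SymmAlg R V :=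
  (RingQuot.mkAlgHom R (SymRel R V)).toLinearMap ∘ₗ TensorAlgebra.ι R

/-! ### Tensor powers and the coalgebra differential -/

open scoped TensorProduct

section Tpow

variable (R : Type*) [CommRing R] (S : Type*) [AddCommGroup S] [Module R S]

/-- The `k`-th tensor power `T^k S` of an `R`-module `S`. -/
abbrev Tpow (k : ℕ) : Type _ := PiTensorProduct R (fun _ : Fin k => S)

/-- Concatenation of tensor powers, `T^a S ⊗ T^b S →ₗ T^(a+b) S`:
the tensor multiplication of the tensor algebra. -/
noncomputable def concat (a b : ℕ) : Tpow R S a ⊗[R] Tpow R S b →ₗ[R] Tpow R S (a + b) :=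
  (PiTensorProduct.reindex R (fun _ : Fin a ⊕ Fin b => S) finSumFinEquiv).toLinearMap ∘ₗ
    (PiTensorProduct.tmulEquiv R S).toLinearMap

/-- The canonical identification `S ≃ T^1 S`. -/
noncomputable def toT1 : S ≃ₗ[R] Tpow R S 1 :=
  (PiTensorProduct.subsingletonEquiv (R := R) (s := fun _ : Fin 1 => S) (0 : Fin 1)).symm

/-- The canonical identification `T^(k+1) S ≃ T^k S ⊗ S` splitting off the last factor. -/
noncomputable def unsnoc (k : ℕ) : Tpow R S (k + 1) ≃ₗ[R] Tpow R S k ⊗[R] S :=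
  ((PiTensorProduct.reindex R (fun _ : Fin (k + 1) => S) finSumFinEquiv.symm).trans
      (PiTensorProduct.tmulEquiv R S).symm).trans
    (TensorProduct.congr (LinearEquiv.refl R _) (toT1 R S).symm)

/-- The canonical identification `S ⊗ S ≃ T^2 S`. -/
noncomputable def toT2 : S ⊗[R] S →ₗ[R] Tpow R S 2 :=
  concat R S 1 1 ∘ₗ TensorProduct.map (toT1 R S).toLinearMap (toT1 R S).toLinearMap

/-- The identification `T^a S ≃ T^b S` for `a = b`. -/
noncomputable def tcast {a b : ℕ} (h : a = b) : Tpow R S a ≃ₗ[R] Tpow R S b :=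
  PiTensorProduct.reindex R (fun _ : Fin a => S) (finCongr h)

variable {S} in
/-- The coalgebra differential `δ_ca : T^k S → T^(k+1) S` obtained by extending
`−Δ̄ : S → S ⊗ S ≃ T² S` (for a given reduced coproduct `Δ̄ = Db`) as a graded
derivation with respect to the tensor product, i.e.
`δ_ca = ∑_{i=1}^k (−1)^i (id^{⊗(i−1)} ⊗ Δ̄ ⊗ id^{⊗(k−i)})`, here realized through the
recursion `δ_ca(X ⊗ φ) = δ_ca(X) ⊗ φ + (−1)^k X ⊗ (−Δ̄ φ)` for `X ∈ T^k S`, `φ ∈ S`. -/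
noncomputable def deltaCa (Db : S →ₗ[R] S ⊗[R] S) : (k : ℕ) → Tpow R S k →ₗ[R] Tpow R S (k + 1)
  | 0 => 0
  | (k + 1) =>
      (concat R S (k + 1) 1 ∘ₗ TensorProduct.map (deltaCa Db k) (toT1 R S).toLinearMap
        + ((-1 : ℤ) ^ k) •
          (concat R S k 2 ∘ₗ TensorProduct.map LinearMap.id (toT2 R S ∘ₗ (-Db))))
        ∘ₗ (unsnoc R S (k + 1 - 1)).toLinearMap

end Tpow

section VE

variable {R : Type*} [CommRing R] [Algebra ℚ R] {V : Type*} [AddCommGroup V] [Module R V]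

/-- The total module `⨁ₖ T^k(Sym V)` of the coalgebra complex. -/
abbrev TcaTot (R : Type*) [CommRing R] (V : Type*) [AddCommGroup V] [Module R V] :=
  DirectSum ℕ (fun k => Tpow R (SymmAlg R V) k)

/-- The total coalgebra differential `δ_ca` on `⨁ₖ T^k(Sym V)`, for the reduced
shuffle coproduct `Db`. -/
noncomputable def deltaCaTot
    (Db : SymmAlg R V →ₗ[R] SymmAlg R V ⊗[R] SymmAlg R V) :
    TcaTot R V →ₗ[R] TcaTot R V :=
  DirectSum.toModule R ℕ _ fun k =>
    DirectSum.lof R ℕ (fun k => Tpow R (SymmAlg R V) k) (k + 1) ∘ₗ deltaCa R Db k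

/-- The van Est differentiation map
`VE(X₁ ⊗ ⋯ ⊗ X_k) = pr_V(X₁) ∧ ⋯ ∧ pr_V(X_k) : T^•(Sym V) → Λ^• V`. -/
noncomputable def vanEstMap (prV : SymmAlg R V →ₗ[R] V) :
    TcaTot R V →ₗ[R] ExteriorAlgebra R V :=
  DirectSum.toModule R ℕ _ fun k =>
    PiTensorProduct.lift
      ((MultilinearMap.mkPiAlgebraFin R k (ExteriorAlgebra R V)).compLinearMap
        fun _ => ExteriorAlgebra.ι R ∘ₗ prV)

/-- The van Est integration map
`VE⁻¹(ξ₁ ∧ ⋯ ∧ ξ_ℓ) = (1/ℓ!) ∑_σ sign(σ) ξ_(σ(1)) ⊗ ⋯ ⊗ ξ_(σ(ℓ))`. -/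
noncomputable def vanEstInv : ExteriorAlgebra R V →ₗ[R] TcaTot R V :=
  ExteriorAlgebra.liftAlternating fun ℓ =>
    (DirectSum.lof R ℕ (fun k => Tpow R (SymmAlg R V) k) ℓ).compAlternatingMap
      (algebraMap ℚ R ((ℓ.factorial : ℚ)⁻¹) •
        MultilinearMap.alternatization
          ((PiTensorProduct.tprod R).compLinearMap fun _ : Fin ℓ => ιS R V))

end VE

section AuxLemmas

variable {R : Type*} [CommRing R] {S : Type*} [AddCommGroup S] [Module R S]

theorem unsnoc_tprod (k : ℕ) (f : Fin (k + 1) → S) :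
    unsnoc R S k (PiTensorProduct.tprod R f)
      = (PiTensorProduct.tprod R fun i : Fin k => f i.castSucc) ⊗ₜ[R] f (Fin.last k) := by
  simp only [unsnoc, toT1, LinearEquiv.trans_apply, PiTensorProduct.reindex_tprod,
    PiTensorProduct.tmulEquiv_symm_apply, TensorProduct.congr_tmul, LinearEquiv.refl_apply,
    LinearEquiv.symm_symm, PiTensorProduct.subsingletonEquiv_apply_tprod]
  rfl

theorem deltaCa_tprod_eq_zero (Db : S →ₗ[R] S ⊗[R] S) :
    ∀ (k : ℕ) (f : Fin k → S), (∀ i, Db (f i) = 0) →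
      deltaCa R Db k (PiTensorProduct.tprod R f) = 0
  | 0, f, hf => rfl
  | (k + 1), f, hf => by
    have h1 := deltaCa_tprod_eq_zero Db k (fun i => f i.castSucc) (fun i => hf _)
    rw [deltaCa]
    simp only [LinearMap.coe_comp, LinearEquiv.coe_toLinearMap, Function.comp_apply]
    erw [unsnoc_tprod (k + 1 - 1) f]
    rw [LinearMap.add_apply, LinearMap.comp_apply]
    erw [TensorProduct.map_tmul]
    erw [h1]
    rw [TensorProduct.zero_tmul, map_zero, zero_add]
    have h3 : (concat R S k 2 ∘ₗ TensorProduct.map LinearMap.id (toT2 R S ∘ₗ (-Db)))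
        ((PiTensorProduct.tprod R fun i : Fin k => f i.castSucc) ⊗ₜ[R] f (Fin.last k))
        = 0 := by
      rw [LinearMap.comp_apply, TensorProduct.map_tmul, LinearMap.comp_apply,
        LinearMap.neg_apply, hf, neg_zero, map_zero, TensorProduct.tmul_zero, map_zero]
    have h2 : (((-1 : ℤ) ^ k) •
        (concat R S k 2 ∘ₗ TensorProduct.map LinearMap.id (toT2 R S ∘ₗ (-Db))))
        ((PiTensorProduct.tprod R fun i : Fin k => f i.castSucc) ⊗ₜ[R] f (Fin.last k))
        = 0 := by
      show ((-1 : ℤ) ^ k) •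
        ((concat R S k 2 ∘ₗ TensorProduct.map LinearMap.id (toT2 R S ∘ₗ (-Db)))
          ((PiTensorProduct.tprod R fun i : Fin k => f i.castSucc) ⊗ₜ[R]
            f (Fin.last k))) = 0
      rw [h3]; exact zsmul_zero _
    exact h2

end AuxLemmas

/-- **The van Est integration map.**
The map `VE⁻¹ : Λ^• V → T^•(Sym V)`,
`VE⁻¹(ξ₁ ∧ ⋯ ∧ ξ_ℓ) = (1/ℓ!) ∑_{σ ∈ S_ℓ} sign(σ) ξ_(σ(1)) ⊗ ⋯ ⊗ ξ_(σ(ℓ))`,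
is a chain map into the kernel of the coalgebra differential (`δ_ca ∘ VE⁻¹ = 0`) and
satisfies `VE ∘ VE⁻¹ = id` on `Λ^• V`, where
`VE(X₁ ⊗ ⋯ ⊗ X_k) = pr_V(X₁) ∧ ⋯ ∧ pr_V(X_k)`. -/
theorem vanEst_integration
    {R : Type*} [CommRing R] [Algebra ℚ R]
    {V : Type*} [AddCommGroup V] [Module R V]
    (Δ : SymmAlg R V →ₐ[R] SymmAlg R V ⊗[R] SymmAlg R V)
    (hΔ : ∀ v : V, Δ (ιS R V v) = 1 ⊗ₜ[R] ιS R V v + ιS R V v ⊗ₜ[R] 1)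
    (prV : SymmAlg R V →ₗ[R] V)
    (hprV1 : ∀ v : V, prV (ιS R V v) = v)
    (hprV0 : ∀ (s : ℕ) (x : Fin s → V), s ≠ 1 → prV (∏ j, ιS R V (x j)) = 0)
    (Db : SymmAlg R V →ₗ[R] SymmAlg R V ⊗[R] SymmAlg R V)
    (hDb : Db = Δ.toLinearMap
      - (TensorProduct.mk R (SymmAlg R V) (SymmAlg R V) 1
        + (TensorProduct.mk R (SymmAlg R V) (SymmAlg R V)).flip 1)) :
    (∀ ξ : ExteriorAlgebra R V, deltaCaTot Db (vanEstInv ξ) = 0) ∧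
    (∀ ξ : ExteriorAlgebra R V, vanEstMap prV (vanEstInv ξ) = ξ) := by
  have hDb0 : ∀ v : V, Db (ιS R V v) = 0 := by
    intro v
    rw [hDb, LinearMap.sub_apply, LinearMap.add_apply, AlgHom.toLinearMap_apply, hΔ,
      TensorProduct.mk_apply, LinearMap.flip_apply, TensorProduct.mk_apply]
    abel
  have key : ∀ (n : ℕ) (v : Fin n → V),
      deltaCa R Db n
        ((MultilinearMap.alternatization
          ((PiTensorProduct.tprod R).compLinearMap fun _ : Fin n => ιS R V)) v) = 0 := by
    intro n v
    rw [MultilinearMap.alternatization_apply, map_sum]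
    refine Finset.sum_eq_zero fun σ _ => ?_
    rw [Units.smul_def, map_zsmul, MultilinearMap.domDomCongr_apply,
      MultilinearMap.compLinearMap_apply,
      deltaCa_tprod_eq_zero Db n _ (fun i => hDb0 _)]; exact zsmul_zero _
  have hterm : ∀ (n : ℕ) (v : Fin n → V) (σ : Equiv.Perm (Fin n)),
      (PiTensorProduct.lift
        ((MultilinearMap.mkPiAlgebraFin R n (ExteriorAlgebra R V)).compLinearMap
          fun _ => ExteriorAlgebra.ι R ∘ₗ prV))
        ((((PiTensorProduct.tprod R).compLinearMap
            fun _ : Fin n => ιS R V).domDomCongr σ) v)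
        = Equiv.Perm.sign σ • ExteriorAlgebra.ιMulti R n v := by
    intro n v σ
    rw [MultilinearMap.domDomCongr_apply, MultilinearMap.compLinearMap_apply,
      PiTensorProduct.lift.tprod, MultilinearMap.compLinearMap_apply,
      MultilinearMap.mkPiAlgebraFin_apply]
    simp only [LinearMap.comp_apply, hprV1]
    rw [← ExteriorAlgebra.ιMulti_apply]
    exact (ExteriorAlgebra.ιMulti R n).map_perm v σ
  constructor
  · intro ξ
    have hξ : ξ ∈ Submodule.span R (Set.range fun x : Σ n, (Fin n → V) =>
        ExteriorAlgebra.ιMulti R x.1 x.2) := by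
      rw [ExteriorAlgebra.ιMulti_span]; exact Submodule.mem_top
    induction hξ using Submodule.span_induction with
    | mem x hx =>
      obtain ⟨⟨n, v⟩, rfl⟩ := hx
      rw [vanEstInv, ExteriorAlgebra.liftAlternating_apply_ιMulti,
        LinearMap.compAlternatingMap_apply, AlternatingMap.smul_apply,
        deltaCaTot, DirectSum.toModule_lof, LinearMap.comp_apply, map_smul, key,
        smul_zero, map_zero]
    | zero => simp
    | add x y _ _ hx hy => rw [map_add, map_add, hx, hy, add_zero]
    | smul r x _ hx => rw [map_smul, map_smul, hx, smul_zero]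
  · intro ξ
    have hξ : ξ ∈ Submodule.span R (Set.range fun x : Σ n, (Fin n → V) =>
        ExteriorAlgebra.ιMulti R x.1 x.2) := by
      rw [ExteriorAlgebra.ιMulti_span]; exact Submodule.mem_top
    induction hξ using Submodule.span_induction with
    | mem x hx =>
      obtain ⟨⟨n, v⟩, rfl⟩ := hx
      rw [vanEstInv, ExteriorAlgebra.liftAlternating_apply_ιMulti,
        LinearMap.compAlternatingMap_apply, AlternatingMap.smul_apply,
        vanEstMap, DirectSum.toModule_lof, LinearMap.map_smul,
        MultilinearMap.alternatization_apply, map_sum]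
      have : ∀ σ : Equiv.Perm (Fin n),
          (PiTensorProduct.lift
            ((MultilinearMap.mkPiAlgebraFin R n (ExteriorAlgebra R V)).compLinearMap
              fun _ => ExteriorAlgebra.ι R ∘ₗ prV))
            (Equiv.Perm.sign σ •
              ((((PiTensorProduct.tprod R).compLinearMap
                  fun _ : Fin n => ιS R V).domDomCongr σ) v))
          = ExteriorAlgebra.ιMulti R n v := by
        intro σ
        rw [Units.smul_def, map_zsmul, hterm, Units.smul_def, smul_smul,
          ← Units.val_mul, Int.units_mul_self, Units.val_one, one_smul]
      rw [Finset.sum_congr rfl fun σ _ => this σ, Finset.sum_const, Finset.card_univ,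
        Fintype.card_perm, Fintype.card_fin, ← Nat.cast_smul_eq_nsmul R,
        ← map_natCast (algebraMap ℚ R), smul_smul, ← map_mul,
        inv_mul_cancel₀ (by exact_mod_cast n.factorial_ne_zero), map_one, one_smul]
    | zero => simp
    | add x y _ _ hx hy => rw [map_add, map_add, hx, hy]
    | smul r x _ hx => rw [map_smul, map_smul, hx]
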